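/- arXiv:1406.2462 — 2 statements merged into one kernel-verified Lean document; each statement's English description precedes it below -/
import Mathlib

section
/- Let f be a non-negative measurable function on 𝒳 and X an 𝒳-valued random variable with m_f = E f(X) and Var(f(X)) ≤ v. Then for every α > 0 and every μ ∈ ℝ, B_f^-(μ,0) ≤ r̄_f(μ) ≤ B_f^+(μ,0), where B_f^+(μ,ε) = (m_f − μ) + (α/2)(m_f − μ)² + (α/2)v + ε and B_f^-(μ,ε) = (m_f − μ) − (α/2)(m_f − μ)² − (α/2)v − ε. -/
open MeasureTheory ProbabilityTheory Real

noncomputable section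

/-- Catoni's truncation function `φ`. -/
def catoniPhi (x : ℝ) : ℝ :=
  if x < 0 then -Real.log (1 - x + x ^ 2 / 2) else Real.log (1 + x + x ^ 2 / 2)

/-- Catoni's empirical criterion `r̂_f(μ)` based on the sample `Xs`. -/
def rhat {Ω 𝒳 : Type*} (n : ℕ) (α : ℝ) (Xs : Fin n → Ω → 𝒳)
    (f : 𝒳 → ℝ) (μ : ℝ) (ω : Ω) : ℝ :=
  (1 / (n * α)) * ∑ l, catoniPhi (α * (f (Xs l ω) - μ))

/-- The deterministic counterpart `r̄_f(μ)` of Catoni's criterion. -/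
def rbar {Ω 𝒳 : Type*} [MeasurableSpace Ω] (P : Measure Ω)
    (α : ℝ) (X : Ω → 𝒳) (f : 𝒳 → ℝ) (μ : ℝ) : ℝ :=
  (1 / α) * ∫ ω, catoniPhi (α * (f (X ω) - μ)) ∂P

lemma qpos (x : ℝ) : 0 < 1 + x + x ^ 2 / 2 := by nlinarith [sq_nonneg (x + 1)]

lemma logq_le (x : ℝ) : Real.log (1 + x + x ^ 2 / 2) ≤ x + x ^ 2 / 2 := by
  have := Real.log_le_sub_one_of_pos (qpos x); linarith

lemma le_logq (x : ℝ) : x - x ^ 2 / 2 ≤ Real.log (1 + x + x ^ 2 / 2) := by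
  have h1 : (1 : ℝ) ≤ (1 + x + x ^ 2 / 2) * (1 + (-x) + (-x) ^ 2 / 2) := by nlinarith [sq_nonneg (x^2)]
  have h2 : 0 ≤ Real.log ((1 + x + x ^ 2 / 2) * (1 + (-x) + (-x) ^ 2 / 2)) := Real.log_nonneg h1
  rw [Real.log_mul (qpos x).ne' (qpos (-x)).ne'] at h2
  have h3 := logq_le (-x)
  linarith

lemma phi_le (x : ℝ) : catoniPhi x ≤ x + x ^ 2 / 2 := by
  unfold catoniPhi
  split
  · have hx : (1 : ℝ) - x + x ^ 2 / 2 = 1 + (-x) + (-x) ^ 2 / 2 := by ring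
    rw [hx]; nlinarith [le_logq (-x)]
  · exact logq_le x

lemma le_phi (x : ℝ) : x - x ^ 2 / 2 ≤ catoniPhi x := by
  unfold catoniPhi
  split
  · have hx : (1 : ℝ) - x + x ^ 2 / 2 = 1 + (-x) + (-x) ^ 2 / 2 := by ring
    rw [hx]; nlinarith [logq_le (-x)]
  · exact le_logq x

lemma phi_meas : Measurable catoniPhi := by
  unfold catoniPhi
  exact Measurable.ite (measurableSet_lt measurable_id measurable_const)
    ((Real.measurable_log.comp (by fun_prop)).neg) (Real.measurable_log.comp (by fun_prop))

lemma abs_phi (x : ℝ) : |catoniPhi x| ≤ |x| + x ^ 2 / 2 := by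
  rw [abs_le]
  constructor
  · have := le_phi x; have := neg_abs_le x; linarith
  · have := phi_le x; have := le_abs_self x; linarith


/-- Lemma 3.1 (first part): the deterministic criterion `r̄_f(μ)` is squeezed between the
quadratic polynomials `B_f^-(μ,0)` and `B_f^+(μ,0)`. -/
theorem stmt_2 {Ω 𝒳 : Type*} [MeasurableSpace Ω] [MeasurableSpace 𝒳]
    (P : Measure Ω) [IsProbabilityMeasure P]
    (X : Ω → 𝒳) (hX : Measurable X)
    (f : 𝒳 → ℝ) (hfm : Measurable f) (hf0 : ∀ x, 0 ≤ f x)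
    (hfL2 : MemLp (fun ω => f (X ω)) 2 P)
    (v : ℝ) (hv : variance (fun ω => f (X ω)) P ≤ v)
    (α : ℝ) (hα : 0 < α) (μ : ℝ) :
    ((∫ ω, f (X ω) ∂P) - μ) - α / 2 * ((∫ ω, f (X ω) ∂P) - μ) ^ 2 - α / 2 * v ≤
        rbar P α X f μ ∧
      rbar P α X f μ ≤
        ((∫ ω, f (X ω) ∂P) - μ) + α / 2 * ((∫ ω, f (X ω) ∂P) - μ) ^ 2 + α / 2 * v := by
  set m := ∫ ω, f (X ω) ∂P with hm
  set g : Ω → ℝ := fun ω => f (X ω) - μ with hg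
  set V := variance (fun ω => f (X ω)) P with hV
  have hgm : Measurable g := (hfm.comp hX).sub measurable_const
  have hg2 : MemLp g 2 P := hfL2.sub (memLp_const μ)
  have hgint : Integrable g P := hg2.integrable one_le_two
  have hgsq : Integrable (fun ω => g ω ^ 2) P := hg2.integrable_sq
  have hfint : Integrable (fun ω => f (X ω)) P := hfL2.integrable one_le_two
  have hfsq : Integrable (fun ω => f (X ω) ^ 2) P := hfL2.integrable_sq
  have hIg : ∫ ω, g ω ∂P = m - μ := by
    rw [hg, integral_sub hfint (integrable_const μ), integral_const]
    simp [hm]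
  have h1 : Integrable (fun ω => f (X ω) ^ 2 - 2 * μ * f (X ω)) P :=
    hfsq.sub (hfint.const_mul (2 * μ))
  have hIg2 : ∫ ω, g ω ^ 2 ∂P = V + (m - μ) ^ 2 := by
    have hvd := variance_eq_sub hfL2
    have key : ∫ ω, g ω ^ 2 ∂P
        = ∫ ω, ((f (X ω) ^ 2 - 2 * μ * f (X ω)) + μ ^ 2) ∂P := by
      congr 1; funext ω; simp only [hg]; ring
    rw [key, integral_add h1 (integrable_const _),
      integral_sub hfsq (hfint.const_mul (2 * μ)), integral_const_mul, integral_const]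
    simp only [measure_univ, probReal_univ, ENNReal.toReal_one, smul_eq_mul, one_mul, mul_one]
    have hvd2 : V = (∫ ω, f (X ω) ^ 2 ∂P) - m ^ 2 := by
      rw [hV, hvd]; rfl
    rw [hvd2]; ring
  have hphi_int : Integrable (fun ω => catoniPhi (α * g ω)) P := by
    apply Integrable.mono' (((hgint.const_mul α).abs).add ((hgsq.const_mul (α ^ 2 / 2))))
    · exact (phi_meas.comp (measurable_const.mul hgm)).aestronglyMeasurable
    · refine Filter.Eventually.of_forall fun ω => ?_
      rw [Real.norm_eq_abs]
      calc |catoniPhi (α * g ω)| ≤ |α * g ω| + (α * g ω) ^ 2 / 2 := abs_phi _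
        _ = |α * g ω| + α ^ 2 / 2 * g ω ^ 2 := by ring
  have hub : Integrable (fun ω => α * g ω + α ^ 2 / 2 * g ω ^ 2) P :=
    (hgint.const_mul α).add (hgsq.const_mul _)
  have hlb : Integrable (fun ω => α * g ω - α ^ 2 / 2 * g ω ^ 2) P :=
    (hgint.const_mul α).sub (hgsq.const_mul _)
  have hIub : ∫ ω, (α * g ω + α ^ 2 / 2 * g ω ^ 2) ∂P
      = α * (m - μ) + α ^ 2 / 2 * (V + (m - μ) ^ 2) := by
    rw [integral_add (hgint.const_mul α) (hgsq.const_mul _),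
      integral_const_mul, integral_const_mul, hIg, hIg2]
  have hIlb : ∫ ω, (α * g ω - α ^ 2 / 2 * g ω ^ 2) ∂P
      = α * (m - μ) - α ^ 2 / 2 * (V + (m - μ) ^ 2) := by
    rw [integral_sub (hgint.const_mul α) (hgsq.const_mul _),
      integral_const_mul, integral_const_mul, hIg, hIg2]
  have hup : ∫ ω, catoniPhi (α * g ω) ∂P ≤ α * (m - μ) + α ^ 2 / 2 * (V + (m - μ) ^ 2) := by
    rw [← hIub]
    exact integral_mono hphi_int hub fun ω => by
      have := phi_le (α * g ω); nlinarith [this]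
  have hlo : α * (m - μ) - α ^ 2 / 2 * (V + (m - μ) ^ 2) ≤ ∫ ω, catoniPhi (α * g ω) ∂P := by
    rw [← hIlb]
    exact integral_mono hlb hphi_int fun ω => by
      have := le_phi (α * g ω); nlinarith [this]
  have hvar0 : 0 ≤ V := variance_nonneg _ _
  have hrbar : rbar P α X f μ = (1 / α) * ∫ ω, catoniPhi (α * g ω) ∂P := rfl
  have hcu : (1 / α) * (α * (m - μ) + α ^ 2 / 2 * (V + (m - μ) ^ 2))
      = (m - μ) + α / 2 * (V + (m - μ) ^ 2) := by
    field_simp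
  have hcl : (1 / α) * (α * (m - μ) - α ^ 2 / 2 * (V + (m - μ) ^ 2))
      = (m - μ) - α / 2 * (V + (m - μ) ^ 2) := by
    field_simp
  have hvle : α / 2 * V ≤ α / 2 * v := by
    apply mul_le_mul_of_nonneg_left hv (by positivity)
  constructor
  · rw [hrbar]
    have := mul_le_mul_of_nonneg_left hlo (le_of_lt (by positivity : (0:ℝ) < 1 / α))
    rw [hcl] at this
    nlinarith [this]
  · rw [hrbar]
    have := mul_le_mul_of_nonneg_left hup (le_of_lt (by positivity : (0:ℝ) < 1 / α))
    rw [hcu] at this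
    nlinarith [this]
end
end

section
/- Let X be a random vector in ℝ^m with E‖X − EX‖² ≤ V < ∞, and let y_1, …, y_k ∈ ℝ^m. Then Var(min_{j=1,…,k} ‖X − y_j‖) ≤ k V. -/
open MeasureTheory ProbabilityTheory

noncomputable section

/-- The variance bound for `k`-means: `Var(min_{j≤k} ‖X - y_j‖) ≤ k V` whenever
`E‖X - EX‖² ≤ V`. -/
theorem stmt_17 {Ω : Type*} [MeasurableSpace Ω] (P : Measure Ω) [IsProbabilityMeasure P]
    {m k : ℕ} (hk : 0 < k)
    (X : Ω → EuclideanSpace ℝ (Fin m)) (hXm : Measurable X) (hX2 : MemLp X 2 P)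
    (V : ℝ) (hV : ∫ ω, ‖X ω - ∫ ω', X ω' ∂P‖ ^ 2 ∂P ≤ V)
    (y : Fin k → EuclideanSpace ℝ (Fin m)) :
    variance (fun ω => ⨅ j, ‖X ω - y j‖) P ≤ k * V := by
  haveI : Nonempty (Fin k) := Fin.pos_iff_nonempty.mp hk
  set μv : EuclideanSpace ℝ (Fin m) := ∫ ω', X ω' ∂P with hμv
  set c : ℝ := ⨅ j, ‖μv - y j‖ with hc
  set Z : Ω → ℝ := fun ω => ⨅ j, ‖X ω - y j‖ with hZ
  have hbdd : ∀ a : EuclideanSpace ℝ (Fin m),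
      BddBelow (Set.range fun j => ‖a - y j‖) := by
    intro a
    exact ⟨0, by rintro _ ⟨j, rfl⟩; positivity⟩
  -- 1-Lipschitz estimate for the min distance
  have key : ∀ a b : EuclideanSpace ℝ (Fin m),
      |(⨅ j, ‖a - y j‖) - (⨅ j, ‖b - y j‖)| ≤ ‖a - b‖ := by
    have base : ∀ a b : EuclideanSpace ℝ (Fin m),
        (⨅ j, ‖a - y j‖) - (⨅ j, ‖b - y j‖) ≤ ‖a - b‖ := by
      intro a b
      have h : (⨅ j, ‖a - y j‖) - ‖a - b‖ ≤ ⨅ j, ‖b - y j‖ := by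
        refine le_ciInf fun j => ?_
        have h1 : (⨅ j, ‖a - y j‖) ≤ ‖a - y j‖ := ciInf_le (hbdd a) j
        have h2 : ‖a - y j‖ ≤ ‖b - y j‖ + ‖a - b‖ := by
          have he : a - y j = (b - y j) + (a - b) := by abel
          rw [he]; exact norm_add_le _ _
        linarith
      linarith
    intro a b
    rw [abs_sub_le_iff]
    exact ⟨base a b, by simpa [norm_sub_rev] using base b a⟩
  have hkey : ∀ ω, |Z ω - c| ≤ ‖X ω - μv‖ := fun ω => key (X ω) μv
  -- measurability
  have hZm : Measurable Z :=
    Measurable.iInf fun j => (hXm.sub measurable_const).norm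
  -- MemLp of Z
  have hbound : MemLp (fun ω => ‖X ω - μv‖ + |c|) 2 P :=
    (hX2.sub (memLp_const μv)).norm.add (memLp_const |c|)
  have hZ2 : MemLp Z 2 P := by
    refine hbound.of_le hZm.aestronglyMeasurable ?_
    filter_upwards with ω
    have h1 := hkey ω
    have : |Z ω| ≤ ‖X ω - μv‖ + |c| := by
      calc |Z ω| = |(Z ω - c) + c| := by ring_nf
        _ ≤ |Z ω - c| + |c| := abs_add_le _ _
        _ ≤ ‖X ω - μv‖ + |c| := by linarith
    simpa [Real.norm_eq_abs] using
      this.trans (le_abs_self _)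
  have hW2 : MemLp (fun ω => Z ω - c) 2 P := hZ2.sub (memLp_const c)
  -- integrabilities
  have hIZ : Integrable Z P := hZ2.integrable one_le_two
  have hInormsq : Integrable (fun ω => ‖X ω - μv‖ ^ 2) P := by
    have := (hX2.sub (memLp_const μv)).norm.integrable_sq
    simpa using this
  -- variance Z ≤ E (Z - c)^2
  have hvar : variance Z P ≤ ∫ ω, (Z ω - c) ^ 2 ∂P := by
    have h1 : variance Z P = (∫ ω, Z ω ^ 2 ∂P) - (∫ ω, Z ω ∂P) ^ 2 := by
      simpa [Pi.pow_apply] using variance_eq_sub hZ2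
    have h2 : ∫ ω, (Z ω - c) ^ 2 ∂P
        = (∫ ω, Z ω ^ 2 ∂P) - 2 * c * (∫ ω, Z ω ∂P) + c ^ 2 := by
      have : ∀ ω, (Z ω - c) ^ 2 = Z ω ^ 2 - 2 * c * Z ω + c ^ 2 := by
        intro ω; ring
      simp_rw [this]
      have hA : Integrable (fun ω => Z ω ^ 2 - 2 * c * Z ω) P :=
        hZ2.integrable_sq.sub (hIZ.const_mul (2 * c))
      rw [integral_add hA (integrable_const _),
        integral_sub hZ2.integrable_sq (hIZ.const_mul (2 * c)),
        integral_const_mul, integral_const]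
      simp
    have h3 : 0 ≤ ((∫ ω, Z ω ∂P) - c) ^ 2 := sq_nonneg _
    nlinarith [h1, h2, h3]
  -- E (Z - c)^2 ≤ E ‖X - μv‖^2
  have hmono : ∫ ω, (Z ω - c) ^ 2 ∂P ≤ ∫ ω, ‖X ω - μv‖ ^ 2 ∂P := by
    refine integral_mono hW2.integrable_sq hInormsq fun ω => ?_
    have := hkey ω
    calc (Z ω - c) ^ 2 = |Z ω - c| ^ 2 := (sq_abs _).symm
      _ ≤ ‖X ω - μv‖ ^ 2 := by
          exact pow_le_pow_left₀ (abs_nonneg _) this 2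
  have hV0 : 0 ≤ V := le_trans (integral_nonneg fun ω => by positivity) hV
  have : variance Z P ≤ V := le_trans hvar (le_trans hmono hV)
  calc variance Z P ≤ V := this
    _ = 1 * V := (one_mul V).symm
    _ ≤ k * V := by
        apply mul_le_mul_of_nonneg_right _ hV0
        exact_mod_cast hk
end
end
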